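/- Let A be an abelian category, let X be an acyclic ℕ-indexed chain complex in A, and let e : X → X be a chain map with e ∘ e = e. Then the chain complex whose n-th term is the kernel of e_n : X_n → X_n, with the differentials induced from those of X, is acyclic. -/

import Mathlib

open CategoryTheory CategoryTheory.Limits

noncomputable section

/-- The chain complex whose `n`-th term is the kernel of `e.f n : X n ⟶ X n` for a chain
map `e : X ⟶ X`, with differentials induced by those of `X`. -/
def kernelComplex {A : Type*} [Category A] [Abelian A] (X : ChainComplex A ℕ)
    (e : X ⟶ X) : ChainComplex A ℕ where
  X n := kernel (e.f n)
  d i j := kernel.lift (e.f j) (kernel.ι (e.f i) ≫ X.d i j)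
    (by rw [Category.assoc, ← e.comm i j, ← Category.assoc, kernel.condition, zero_comp])
  shape i j h := by
    rw [← cancel_mono (kernel.ι (e.f j))]
    simp only [kernel.lift_ι, zero_comp]
    rw [X.shape i j h, comp_zero]
  d_comp_d' i j k _ _ := by
    rw [← cancel_mono (kernel.ι (e.f k))]
    simp

/-- If `X` is an acyclic `ℕ`-indexed chain complex in an abelian
category and `e : X ⟶ X` is an idempotent chain map, then the complex of kernels of the
`e.f n`, with the induced differentials, is acyclic. -/
theorem kernelComplex_acyclic {A : Type*} [Category A] [Abelian A]
    (X : ChainComplex A ℕ) (hX : ∀ n, X.ExactAt n)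
    (e : X ⟶ X) (he : e ≫ e = e) :
    ∀ n, (kernelComplex X e).ExactAt n := by
  intro n
  let ι : kernelComplex X e ⟶ X :=
    { f := fun n => kernel.ι (e.f n)
      comm' := fun i j _ => by simp [kernelComplex] }
  let p : X ⟶ kernelComplex X e :=
    { f := fun n => kernel.lift (e.f n) (𝟙 _ - e.f n)
        (by
          have : e.f n ≫ e.f n = e.f n := by
            rw [← HomologicalComplex.comp_f, he]
          simp [Preadditive.sub_comp, this])
      comm' := fun i j _ => by
        refine (cancel_mono (kernel.ι (e.f j))).1 ?_
        simp [kernelComplex, Preadditive.comp_sub, Preadditive.sub_comp, e.comm i j] }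
  have hip : ι ≫ p = 𝟙 _ := by
    ext m
    refine (cancel_mono (kernel.ι (e.f m))).1 ?_
    simp [ι, p, kernelComplex, Preadditive.comp_sub]
  rw [HomologicalComplex.exactAt_iff_isZero_homology]
  have h := hX n
  rw [HomologicalComplex.exactAt_iff_isZero_homology] at h
  have : 𝟙 ((kernelComplex X e).homology n) = 0 := by
    rw [← HomologicalComplex.homologyMap_id, ← hip,
      HomologicalComplex.homologyMap_comp,
      h.eq_of_tgt (HomologicalComplex.homologyMap ι n) 0, zero_comp]
  exact IsZero.of_iso (isZero_zero A) (by
    exact { hom := 0, inv := 0, hom_inv_id := by rw [this, comp_zero],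
            inv_hom_id := by simp })

end
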